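/- Let α ∈ (0,1] and v, δ > 0. Consider the system of equations in the unknowns (ℓ₁, ℓⱼ) ∈ (0,1)²: ℓⱼ ln(ℓⱼ) = α v ℓ₁ ln(ℓ₁) and ℓⱼ = α (δ/v) ℓ₁. Then the system has a solution if and only if either (v² = δ and αv = 1) or (0 < v < min{αδ, √δ} or v > max{αδ, √δ}). In the first case, the solutions are exactly the pairs with ℓⱼ = ℓ₁ ∈ (0,1). In the second case, the solution is unique and given by ℓ₁ = (αδ/v)^{δ/(v²−δ)} and ℓⱼ = (αδ/v)^{v²/(v²−δ)}, and these two values are distinct. -/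

import Mathlib

open Set

private lemma stmt19_keyEq (α v δ l1 lj : ℝ) (hα0 : 0 < α) (hv : 0 < v) (hδ : 0 < δ)
    (hl1 : 0 < l1)
    (h3 : lj * Real.log lj = α * v * (l1 * Real.log l1))
    (h4 : lj = α * (δ / v) * l1) :
    δ * Real.log (α * δ / v) = (v ^ 2 - δ) * Real.log l1 := by
  have hv' : v ≠ 0 := ne_of_gt hv
  have hApos : 0 < α * δ / v := by positivity
  have hlj : lj = (α * δ / v) * l1 := by rw [h4]; ring
  rw [hlj, Real.log_mul (ne_of_gt hApos) (ne_of_gt hl1)] at h3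
  have e : (α * δ / v) * v = α * δ := div_mul_cancel₀ _ hv'
  have hcan : α * l1 * (δ * (Real.log (α * δ / v) + Real.log l1))
      = α * l1 * (v ^ 2 * Real.log l1) := by
    linear_combination v * h3 - l1 * (Real.log (α * δ / v) + Real.log l1) * e
  have h5 := mul_left_cancel₀ (ne_of_gt (mul_pos hα0 hl1)) hcan
  linear_combination h5

/-- End states (with zero lower states) of completely non-stationary traveling waves for the
logarithmic flux with constant diffusivities: solvability of the algebraic system, and the
explicit (unique) solution in the non-proportional case. -/
theorem stmt19 (α v δ : ℝ) (hα : α ∈ Ioc (0:ℝ) 1) (hv : 0 < v) (hδ : 0 < δ)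
    (P : ℝ → ℝ → Prop)
    (hP : ∀ l1 lj : ℝ, P l1 lj ↔
      (l1 ∈ Ioo (0:ℝ) 1 ∧ lj ∈ Ioo (0:ℝ) 1 ∧
        lj * Real.log lj = α * v * (l1 * Real.log l1) ∧
        lj = α * (δ / v) * l1)) :
    ((∃ l1 lj : ℝ, P l1 lj) ↔
      ((v ^ 2 = δ ∧ α * v = 1) ∨
        (v < min (α * δ) (Real.sqrt δ) ∨ max (α * δ) (Real.sqrt δ) < v))) ∧
    ((v ^ 2 = δ ∧ α * v = 1) →
      ∀ l1 lj : ℝ, P l1 lj ↔ (l1 ∈ Ioo (0:ℝ) 1 ∧ lj = l1)) ∧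
    ((v < min (α * δ) (Real.sqrt δ) ∨ max (α * δ) (Real.sqrt δ) < v) →
      (∀ l1 lj : ℝ, P l1 lj ↔
        (l1 = (α * δ / v) ^ (δ / (v ^ 2 - δ)) ∧
          lj = (α * δ / v) ^ (v ^ 2 / (v ^ 2 - δ)))) ∧
      (α * δ / v) ^ (δ / (v ^ 2 - δ)) ≠ (α * δ / v) ^ (v ^ 2 / (v ^ 2 - δ))) := by
  obtain ⟨hα0, hα1⟩ := hα
  have hv' : v ≠ 0 := ne_of_gt hv
  have hApos : 0 < α * δ / v := by positivity
  set L := Real.log (α * δ / v) with hLdef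
  -- sign of L * (v^2 - δ) in case 2
  have hsign : (v < min (α * δ) (Real.sqrt δ) ∨ max (α * δ) (Real.sqrt δ) < v) →
      L * (v ^ 2 - δ) < 0 := by
    rintro (h | h)
    · have h1 : v < α * δ := lt_of_lt_of_le h (min_le_left _ _)
      have h2 : v < Real.sqrt δ := lt_of_lt_of_le h (min_le_right _ _)
      have hv2 : v ^ 2 < δ := (Real.lt_sqrt hv.le).mp h2
      have hLpos : 0 < L := Real.log_pos ((one_lt_div hv).mpr h1)
      exact mul_neg_of_pos_of_neg hLpos (by linarith)
    · have h1 : α * δ < v := lt_of_le_of_lt (le_max_left _ _) h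
      have h2 : Real.sqrt δ < v := lt_of_le_of_lt (le_max_right _ _) h
      have hv2 : δ < v ^ 2 := (Real.sqrt_lt' hv).mp h2
      have hLneg : L < 0 := Real.log_neg hApos ((div_lt_one hv).mpr h1)
      exact mul_neg_of_neg_of_pos hLneg (by linarith)
  -- membership helper
  have hmem : ∀ x : ℝ, x * L < 0 → (α * δ / v) ^ x ∈ Ioo (0:ℝ) 1 := by
    intro x hx
    refine ⟨Real.rpow_pos_of_pos hApos x, ?_⟩
    rw [Real.rpow_def_of_pos hApos, Real.exp_lt_one_iff]
    rw [mul_comm] at hx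
    exact hx
  -- characterization of solutions in case 2
  have char2 : L * (v ^ 2 - δ) < 0 → ∀ l1 lj : ℝ, P l1 lj ↔
      (l1 = (α * δ / v) ^ (δ / (v ^ 2 - δ)) ∧
        lj = (α * δ / v) ^ (v ^ 2 / (v ^ 2 - δ))) := by
    intro hopp l1 lj
    have hne : v ^ 2 - δ ≠ 0 := by
      intro h; rw [h, mul_zero] at hopp; exact lt_irrefl 0 hopp
    have hsq : (0:ℝ) < (v ^ 2 - δ) ^ 2 := pow_two_pos_of_ne_zero hne
    have hexp : v ^ 2 / (v ^ 2 - δ) = 1 + δ / (v ^ 2 - δ) := by field_simp; ring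
    rw [hP]
    constructor
    · rintro ⟨h1, h2, h3, h4⟩
      have hk := stmt19_keyEq α v δ l1 lj hα0 hv hδ h1.1 h3 h4
      have hlog1 : Real.log l1 = δ / (v ^ 2 - δ) * L := by
        field_simp
        linarith [hk]
      have hl1eq : l1 = (α * δ / v) ^ (δ / (v ^ 2 - δ)) := by
        rw [Real.rpow_def_of_pos hApos, ← Real.exp_log h1.1, hlog1, mul_comm]
      refine ⟨hl1eq, ?_⟩
      have hlj : lj = (α * δ / v) * l1 := by rw [h4]; ring
      rw [hlj, hl1eq, hexp, Real.rpow_add hApos, Real.rpow_one]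
    · rintro ⟨hl1, hlj⟩
      have he1 : δ / (v ^ 2 - δ) * L < 0 := by
        have heq : δ / (v ^ 2 - δ) * L = δ * (L * (v ^ 2 - δ)) / (v ^ 2 - δ) ^ 2 := by
          field_simp
        rw [heq]
        exact div_neg_of_neg_of_pos (mul_neg_of_pos_of_neg hδ hopp) hsq
      have he2 : v ^ 2 / (v ^ 2 - δ) * L < 0 := by
        have heq : v ^ 2 / (v ^ 2 - δ) * L = v ^ 2 * (L * (v ^ 2 - δ)) / (v ^ 2 - δ) ^ 2 := by
          field_simp
        rw [heq]
        exact div_neg_of_neg_of_pos (mul_neg_of_pos_of_neg (by positivity) hopp) hsq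
      have h1 : l1 ∈ Ioo (0:ℝ) 1 := hl1 ▸ hmem _ he1
      have h2 : lj ∈ Ioo (0:ℝ) 1 := hlj ▸ hmem _ he2
      have heq2 : lj = α * (δ / v) * l1 := by
        rw [hlj, hl1, hexp, Real.rpow_add hApos, Real.rpow_one]
        have : α * δ / v = α * (δ / v) := by ring
        rw [this]
      refine ⟨h1, h2, ?_, heq2⟩
      have hlog1 : Real.log l1 = δ / (v ^ 2 - δ) * L := by
        rw [hl1, Real.log_rpow hApos]
      have hlog2 : Real.log lj = v ^ 2 / (v ^ 2 - δ) * L := by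
        rw [hlj, Real.log_rpow hApos]
      rw [hlog1, hlog2]
      have hfac : α * (δ / v) * (v ^ 2 / (v ^ 2 - δ) * L) = α * v * (δ / (v ^ 2 - δ) * L) := by
        field_simp
      linear_combination (v ^ 2 / (v ^ 2 - δ) * L) * heq2 + l1 * hfac
  -- distinctness of the two powers in case 2
  have hdist : L * (v ^ 2 - δ) < 0 →
      (α * δ / v) ^ (δ / (v ^ 2 - δ)) ≠ (α * δ / v) ^ (v ^ 2 / (v ^ 2 - δ)) := by
    intro hopp h
    have hne : v ^ 2 - δ ≠ 0 := by
      intro h'; rw [h', mul_zero] at hopp; exact lt_irrefl 0 hopp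
    have hLne : L ≠ 0 := by
      intro h'; rw [h', zero_mul] at hopp; exact lt_irrefl 0 hopp
    have := congrArg Real.log h
    rw [Real.log_rpow hApos, Real.log_rpow hApos] at this
    have hee : δ / (v ^ 2 - δ) = v ^ 2 / (v ^ 2 - δ) := mul_right_cancel₀ hLne this
    have : δ = v ^ 2 := by
      field_simp at hee
      linarith
    exact hne (by linarith)
  refine ⟨?_, ?_, fun hc => ⟨char2 (hsign hc), hdist (hsign hc)⟩⟩
  · constructor
    · rintro ⟨l1, lj, hPl⟩
      rw [hP] at hPl
      obtain ⟨h1, h2, h3, h4⟩ := hPl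
      have hk := stmt19_keyEq α v δ l1 lj hα0 hv hδ h1.1 h3 h4
      have hg : Real.log l1 < 0 := Real.log_neg h1.1 h1.2
      by_cases hcase : v ^ 2 = δ
      · left
        refine ⟨hcase, ?_⟩
        have hL0 : L = 0 := by
          have hz : δ * L = 0 := by rw [hk, hcase]; ring
          rcases mul_eq_zero.mp hz with h' | h'
          · exact absurd h' (ne_of_gt hδ)
          · exact h'
        have hA1 : α * δ / v = 1 := by
          rcases Real.log_eq_zero.mp hL0 with h' | h' | h'
          · exact absurd h' (ne_of_gt hApos)
          · exact h'
          · linarith [hApos]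
        have : α * v = α * v ^ 2 / v := by field_simp
        rw [this, hcase, hA1]
      · right
        have hne : v ^ 2 - δ ≠ 0 := sub_ne_zero.mpr hcase
        have hopp : L * (v ^ 2 - δ) < 0 := by
          have hLval : L = (v ^ 2 - δ) * Real.log l1 / δ := by
            field_simp
            linarith [hk]
          have heq : (v ^ 2 - δ) * Real.log l1 / δ * (v ^ 2 - δ)
              = (v ^ 2 - δ) ^ 2 * Real.log l1 / δ := by ring
          rw [hLval, heq]
          exact div_neg_of_neg_of_pos
            (mul_neg_of_pos_of_neg (pow_two_pos_of_ne_zero hne) hg) hδ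
        rcases lt_or_gt_of_ne hne with hlt | hgt
        · left
          have hLpos : 0 < L := by nlinarith
          have hA1 : 1 < α * δ / v := by
            by_contra hle
            push_neg at hle
            linarith [Real.log_nonpos hApos.le hle]
          refine lt_min ((one_lt_div hv).mp hA1) ?_
          exact (Real.lt_sqrt hv.le).mpr (by linarith)
        · right
          have hLneg : L < 0 := by nlinarith
          have hA1 : α * δ / v < 1 := by
            by_contra hle
            push_neg at hle
            linarith [Real.log_nonneg hle]
          refine max_lt ((div_lt_one hv).mp hA1) ?_
          exact (Real.sqrt_lt' hv).mpr (by linarith)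
    · rintro (⟨hvd, hαv⟩ | hc)
      · refine ⟨1/2, 1/2, ?_⟩
        rw [hP]
        have hAone : α * (δ / v) = 1 := by
          have : α * (δ / v) = α * (v ^ 2 / v) := by rw [hvd]
          rw [this]
          field_simp
          linear_combination hαv
        refine ⟨by norm_num, by norm_num, ?_, by rw [hAone, one_mul]⟩
        rw [hαv]; ring
      · exact ⟨_, _, (char2 (hsign hc) _ _).mpr ⟨rfl, rfl⟩⟩
  · rintro ⟨hvd, hαv⟩ l1 lj
    rw [hP]
    have hAone : α * (δ / v) = 1 := by
      have : α * (δ / v) = α * (v ^ 2 / v) := by rw [hvd]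
      rw [this]
      field_simp
      linear_combination hαv
    constructor
    · rintro ⟨h1, h2, h3, h4⟩
      exact ⟨h1, by rw [h4, hAone, one_mul]⟩
    · rintro ⟨h1, h4⟩
      subst h4
      exact ⟨h1, h1, by rw [hαv]; ring, by rw [hAone, one_mul]⟩
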